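/- Let Γ₀ be a smooth closed curve in ℝⁿ lying outside the closed unit ball centered at p, and let Π_p(x) = p + (x−p)/|x−p| be radial projection onto the unit sphere around p. Then the length of Π_p(Γ₀) equals −∫_{Γ₀} k⃗ · ν_C ds, where k⃗ is the curvature vector of Γ₀ in ℝⁿ and ν_C(q) is the unit vector normal to Γ₀ at q, lying in the plane spanned by the tangent vector at q and q−p, and pointing away from p. -/

import Mathlib

open Real RealInnerProductSpace intervalIntegral

/-- **Gauss–Bonnet for a cone over a smooth closed curve.**
Let `Γ₀` be a `C²` closed (period `L`) unit-speed curve `γ` in `ℝⁿ` lying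
outside the closed unit ball centered at `p`, and let
`Π_p(x) = p + (x−p)/‖x−p‖` be the radial projection to the unit sphere around
`p`.  Let `ν t` be the unit vector normal to the curve at `γ t`, lying in the
plane spanned by the tangent `γ' t` and `γ t − p`, and pointing away from `p`
(the outward conormal of the cone `C_p(Γ₀)`).  Then the length of `Π_p(Γ₀)`
equals `−∫_{Γ₀} ⟨k⃗, ν⟩ ds`, where `k⃗ = γ''` is the curvature vector. -/
private lemma inner_expand {E : Type*} [NormedAddCommGroup E] [InnerProductSpace ℝ E]
    (v w : E) (R F : ℝ) (hR : R ≠ 0) (hv : ⟪v, v⟫ = 1) (hw : ⟪w, w⟫ = R ^ 2)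
    (hvw : ⟪v, w⟫ = F) :
    ⟪R⁻¹ • v + (-(F / R) / R ^ 2) • w, R⁻¹ • v + (-(F / R) / R ^ 2) • w⟫ =
      (R ^ 2 - F ^ 2) / R ^ 4 := by
  have hwv : ⟪w, v⟫ = F := (real_inner_comm v w).trans hvw
  simp only [inner_add_left, inner_add_right, real_inner_smul_left,
    real_inner_smul_right, hv, hw, hvw, hwv]
  field_simp
  ring

private lemma cone_alg_aux (R F G S : ℝ) (hR : R ≠ 0) (hS : S ≠ 0)
    (hSeq : S ^ 2 = R ^ 2 - F ^ 2) :
    1 / (S / R) * (((G + 1) * R - F * (F / R)) / R ^ 2) = S / R ^ 2 + G / S := by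
  field_simp
  linear_combination (-1 : ℝ) * hSeq

theorem length_of_projection_eq_neg_integral_curvature (n : ℕ) (L : ℝ) (hL : 0 < L)
    (p : EuclideanSpace ℝ (Fin n)) (γ γ' γ'' : ℝ → EuclideanSpace ℝ (Fin n))
    (hderiv : ∀ t : ℝ, HasDerivAt γ (γ' t) t)
    (hderiv' : ∀ t : ℝ, HasDerivAt γ' (γ'' t) t)
    (hC2 : Continuous γ'')
    (hspeed : ∀ t : ℝ, ‖γ' t‖ = 1)
    (hclosed : ∀ t : ℝ, γ (t + L) = γ t)
    (hout : ∀ t : ℝ, 1 ≤ ‖γ t - p‖)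
    (ν : ℝ → EuclideanSpace ℝ (Fin n))
    (hν₁ : ∀ t, ‖ν t‖ = 1)
    (hν₂ : ∀ t, ⟪ν t, γ' t⟫ = 0)
    (hν₃ : ∀ t, ν t ∈ Submodule.span ℝ ({γ' t, γ t - p} :
      Set (EuclideanSpace ℝ (Fin n))))
    (hν₄ : ∀ t, 0 < ⟪ν t, γ t - p⟫) :
    (∫ t in (0 : ℝ)..L,
        ‖deriv (fun s => p + ‖γ s - p‖⁻¹ • (γ s - p)) t‖) =
      -∫ t in (0 : ℝ)..L, ⟪γ'' t, ν t⟫ := by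
  classical
  set r : ℝ → ℝ := fun t => ‖γ t - p‖ with hr_def
  set f : ℝ → ℝ := fun t => ⟪γ' t, γ t - p⟫ with hf_def
  set g : ℝ → ℝ := fun t => ⟪γ'' t, γ t - p⟫ with hg_def
  set Q : ℝ → ℝ := fun t => r t ^ 2 - f t ^ 2 with hQ_def
  have hr1 : ∀ t, 1 ≤ r t := hout
  have hrpos : ∀ t, 0 < r t := fun t => lt_of_lt_of_le one_pos (hr1 t)
  have hrne : ∀ t, r t ≠ 0 := fun t => ne_of_gt (hrpos t)
  have hsub : ∀ t, HasDerivAt (fun s => γ s - p) (γ' t) t :=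
    fun t => (hderiv t).sub_const p
  have hγ'cont : Continuous γ' :=
    continuous_iff_continuousAt.2 fun t => (hderiv' t).continuousAt
  have hγcont : Continuous γ :=
    continuous_iff_continuousAt.2 fun t => (hderiv t).continuousAt
  have hsubcont : Continuous (fun t => γ t - p) := hγcont.sub continuous_const
  have hrcont : Continuous r := hsubcont.norm
  have hfcont : Continuous f := hγ'cont.inner hsubcont
  have hgcont : Continuous g := hC2.inner hsubcont
  have hQcont : Continuous Q := (hrcont.pow 2).sub (hfcont.pow 2)
  have hγ'self : ∀ t, ⟪γ' t, γ' t⟫ = 1 := by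
    intro t
    rw [real_inner_self_eq_norm_sq, hspeed]; norm_num
  have hγpself : ∀ t, ⟪γ t - p, γ t - p⟫ = r t ^ 2 := by
    intro t; rw [real_inner_self_eq_norm_sq]
  have horth : ∀ t, ⟪γ'' t, γ' t⟫ = 0 := by
    intro t
    have h1 : HasDerivAt (fun s => ⟪γ' s, γ' s⟫)
        (⟪γ' t, γ'' t⟫ + ⟪γ'' t, γ' t⟫) t := HasDerivAt.inner ℝ (hderiv' t) (hderiv' t)
    have h2 : (fun s => ⟪γ' s, γ' s⟫) = fun _ => (1 : ℝ) := by
      funext s; exact hγ'self s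
    rw [h2] at h1
    have h3 := (hasDerivAt_const t (1 : ℝ)).unique h1
    have h4 : ⟪γ' t, γ'' t⟫ = ⟪γ'' t, γ' t⟫ := real_inner_comm _ _
    rw [h4] at h3
    linarith
  have hf' : ∀ t, HasDerivAt f (g t + 1) t := by
    intro t
    have h1 : HasDerivAt (fun s => ⟪γ' s, γ s - p⟫)
        (⟪γ' t, γ' t⟫ + ⟪γ'' t, γ t - p⟫) t := HasDerivAt.inner ℝ (hderiv' t) (hsub t)
    rw [hγ'self t] at h1
    rw [hf_def]
    convert h1 using 1
    simp only [hg_def]; ring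
  have hr' : ∀ t, HasDerivAt r (f t / r t) t := by
    intro t
    have hR : HasDerivAt (fun s => ⟪γ s - p, γ s - p⟫) (2 * f t) t := by
      have h := HasDerivAt.inner ℝ (hsub t) (hsub t)
      have hc : ⟪γ t - p, γ' t⟫ = f t := real_inner_comm _ _
      rw [hc] at h
      exact h.congr_deriv (by rw [two_mul])
    have hRt : ⟪γ t - p, γ t - p⟫ ≠ 0 := by
      rw [hγpself t]; exact pow_ne_zero 2 (hrne t)
    have hsq := (Real.hasDerivAt_sqrt hRt).comp t hR
    have heq : (Real.sqrt ∘ fun s => ⟪γ s - p, γ s - p⟫) = r := by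
      funext s
      simp only [Function.comp_apply, hγpself s]
      exact Real.sqrt_sq (norm_nonneg _)
    rw [heq] at hsq
    have hval : 1 / (2 * Real.sqrt ⟪γ t - p, γ t - p⟫) * (2 * f t) = f t / r t := by
      rw [hγpself t, Real.sqrt_sq (norm_nonneg _)]
      have hnr : ‖γ t - p‖ = r t := rfl
      rw [hnr]
      field_simp [hrne t]
    rwa [hval] at hsq
  -- structure of ν
  have key : ∀ t, 0 < Q t ∧
      ν t = (Real.sqrt (Q t))⁻¹ • ((γ t - p) - f t • γ' t) := by
    intro t
    obtain ⟨a, b, hab⟩ := Submodule.mem_span_pair.mp (hν₃ t)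
    have hνγ' : ⟪γ' t, ν t⟫ = 0 := by rw [real_inner_comm]; exact hν₂ t
    have h1 : a + b * f t = 0 := by
      have h := hν₂ t
      rw [← hab, inner_add_left, real_inner_smul_left, real_inner_smul_left,
        hγ'self t] at h
      have hc : ⟪γ t - p, γ' t⟫ = f t := real_inner_comm _ _
      rw [hc] at h
      linarith
    have ha : a = -(b * f t) := by linarith
    have h2 : ⟪ν t, γ t - p⟫ = b * Q t := by
      rw [← hab, inner_add_left, real_inner_smul_left, real_inner_smul_left,
        hγpself t, ha, hQ_def]
      have hc : ⟪γ' t, γ t - p⟫ = f t := rfl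
      rw [hc]; ring
    have h3 : (1 : ℝ) = b ^ 2 * Q t := by
      have hn : ⟪ν t, ν t⟫ = 1 := by
        rw [real_inner_self_eq_norm_sq, hν₁]; norm_num
      calc (1 : ℝ) = ⟪ν t, ν t⟫ := hn.symm
        _ = ⟪a • γ' t + b • (γ t - p), ν t⟫ := by rw [hab]
        _ = a * ⟪γ' t, ν t⟫ + b * ⟪γ t - p, ν t⟫ := by
            rw [inner_add_left, real_inner_smul_left, real_inner_smul_left]
        _ = b * (b * Q t) := by
            rw [hνγ', real_inner_comm (ν t) (γ t - p), h2]; ring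
        _ = b ^ 2 * Q t := by ring
    have hQpos : 0 < Q t := by
      rcases lt_trichotomy (Q t) 0 with h | h | h
      · nlinarith [sq_nonneg b]
      · rw [h] at h3; norm_num at h3
      · exact h
    have hbpos : 0 < b := by
      have h := hν₄ t
      rw [h2] at h
      nlinarith
    have hb : b = (Real.sqrt (Q t))⁻¹ := by
      have hb2 : b ^ 2 = (Q t)⁻¹ := by
        have hQne : Q t ≠ 0 := ne_of_gt hQpos
        field_simp [hQne]
        linarith
      have hbb : b = Real.sqrt (b ^ 2) := (Real.sqrt_sq hbpos.le).symm
      rw [hbb, hb2, ← Real.sqrt_inv]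
    refine ⟨hQpos, ?_⟩
    rw [← hab, ha, ← hb]
    module
  have hQpos : ∀ t, 0 < Q t := fun t => (key t).1
  have hsQpos : ∀ t, 0 < Real.sqrt (Q t) := fun t => Real.sqrt_pos.2 (hQpos t)
  have hsQ2 : ∀ t, Real.sqrt (Q t) ^ 2 = Q t := fun t => Real.sq_sqrt (hQpos t).le
  -- inner of curvature with ν
  have hcurv : ∀ t, ⟪γ'' t, ν t⟫ = g t / Real.sqrt (Q t) := by
    intro t
    rw [(key t).2, real_inner_smul_right, inner_sub_right, real_inner_smul_right,
      horth t]
    rw [hg_def]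
    field_simp
    ring
  -- the projection derivative
  set P' : ℝ → EuclideanSpace ℝ (Fin n) :=
    fun t => (r t)⁻¹ • γ' t + (-(f t / r t) / r t ^ 2) • (γ t - p) with hP'_def
  have hPd : ∀ t, HasDerivAt (fun s => p + ‖γ s - p‖⁻¹ • (γ s - p)) (P' t) t := by
    intro t
    have hinv : HasDerivAt (fun s => (r s)⁻¹) (-(f t / r t) / r t ^ 2) t :=
      (hr' t).inv (hrne t)
    exact (hinv.smul (hsub t)).const_add p
  -- norm of the projection derivative
  have hnorm : ∀ t, ‖P' t‖ = Real.sqrt (Q t) / r t ^ 2 := by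
    intro t
    have hip : ⟪P' t, P' t⟫ = Q t / r t ^ 4 := by
      have h := inner_expand (γ' t) (γ t - p) (r t) (f t) (hrne t)
        (hγ'self t) (hγpself t) rfl
      exact h
    have h1 : ‖P' t‖ = Real.sqrt (Q t / r t ^ 4) := by
      rw [← Real.sqrt_sq (norm_nonneg (P' t)), ← real_inner_self_eq_norm_sq, hip]
    rw [h1, Real.sqrt_div (hQpos t).le]
    congr 1
    have h4 : r t ^ 4 = (r t ^ 2) ^ 2 := by ring
    rw [h4, Real.sqrt_sq (by positivity)]
  -- the angle function
  set φ : ℝ → ℝ := fun t => Real.arcsin (f t / r t) with hφ_def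
  have hf2lt : ∀ t, (f t / r t) ^ 2 < 1 := by
    intro t
    have h := hQpos t
    simp only [hQ_def] at h
    rw [div_pow, div_lt_one (pow_pos (hrpos t) 2)]
    linarith
  have hφ' : ∀ t, HasDerivAt φ (‖P' t‖ + ⟪γ'' t, ν t⟫) t := by
    intro t
    have h₁ : f t / r t ≠ -1 := by
      intro h; have h' := hf2lt t; rw [h] at h'; norm_num at h'
    have h₂ : f t / r t ≠ 1 := by
      intro h; have h' := hf2lt t; rw [h] at h'; norm_num at h'
    have hc : HasDerivAt (fun s => f s / r s)
        (((g t + 1) * r t - f t * (f t / r t)) / r t ^ 2) t :=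
      (hf' t).div (hr' t) (hrne t)
    have harc := (Real.hasDerivAt_arcsin h₁ h₂).comp t hc
    have heq : (Real.arcsin ∘ fun s => f s / r s) = φ := rfl
    rw [heq] at harc
    have hsq2 : Real.sqrt (1 - (f t / r t) ^ 2) = Real.sqrt (Q t) / r t := by
      have hsq1 : 1 - (f t / r t) ^ 2 = Q t / r t ^ 2 := by
        simp only [hQ_def]
        field_simp [hrne t]
      rw [hsq1, Real.sqrt_div (hQpos t).le, Real.sqrt_sq (hrpos t).le]
    have hval : 1 / Real.sqrt (1 - (f t / r t) ^ 2) *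
        (((g t + 1) * r t - f t * (f t / r t)) / r t ^ 2) =
        ‖P' t‖ + ⟪γ'' t, ν t⟫ := by
      rw [hsq2, hnorm t, hcurv t]
      exact cone_alg_aux (r t) (f t) (g t) (Real.sqrt (Q t)) (hrne t)
        (ne_of_gt (hsQpos t)) ((hsQ2 t).trans rfl)
    rwa [hval] at harc
  -- periodicity
  have hγper : γ L = γ 0 := by have h := hclosed 0; rwa [zero_add] at h
  have hγ'per : γ' L = γ' 0 := by
    have h1 : HasDerivAt (fun s => γ (s + L)) (γ' (0 + L)) 0 :=
      HasDerivAt.comp_add_const 0 L (hderiv (0 + L))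
    have h2 : (fun s => γ (s + L)) = γ := funext hclosed
    rw [h2] at h1
    have h3 := (hderiv 0).unique h1
    rw [zero_add] at h3
    exact h3.symm
  have hφper : φ L = φ 0 := by
    rw [hφ_def]
    simp only [hf_def, hr_def, hγper, hγ'per]
  -- continuity of integrands
  have hcont1 : Continuous (fun t => ‖P' t‖) := by
    have : (fun t => ‖P' t‖) = fun t => Real.sqrt (Q t) / r t ^ 2 :=
      funext hnorm
    rw [this]
    exact (hQcont.sqrt).div (hrcont.pow 2) (fun t => pow_ne_zero 2 (hrne t))
  have hcont2 : Continuous (fun t => ⟪γ'' t, ν t⟫) := by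
    have : (fun t => ⟪γ'' t, ν t⟫) = fun t => g t / Real.sqrt (Q t) :=
      funext hcurv
    rw [this]
    exact hgcont.div (hQcont.sqrt) (fun t => ne_of_gt (hsQpos t))
  have i1 : IntervalIntegrable (fun t => ‖P' t‖) MeasureTheory.volume 0 L :=
    hcont1.intervalIntegrable 0 L
  have i2 : IntervalIntegrable (fun t => ⟪γ'' t, ν t⟫) MeasureTheory.volume 0 L :=
    hcont2.intervalIntegrable 0 L
  -- rewrite the left side
  have hderiv_eq : ∀ t, deriv (fun s => p + ‖γ s - p‖⁻¹ • (γ s - p)) t = P' t :=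
    fun t => (hPd t).deriv
  have hLHS : (∫ t in (0 : ℝ)..L,
      ‖deriv (fun s => p + ‖γ s - p‖⁻¹ • (γ s - p)) t‖) =
      ∫ t in (0 : ℝ)..L, ‖P' t‖ := by
    apply intervalIntegral.integral_congr
    intro t _
    simp only []
    rw [hderiv_eq t]
  rw [hLHS]
  -- the fundamental theorem of calculus step
  have hFTC : (∫ t in (0 : ℝ)..L, (‖P' t‖ + ⟪γ'' t, ν t⟫)) = 0 := by
    rw [intervalIntegral.integral_eq_sub_of_hasDerivAt
      (fun t _ => hφ' t) (i1.add i2)]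
    rw [hφper]; ring
  have hsplit : (∫ t in (0 : ℝ)..L, ‖P' t‖) =
      (∫ t in (0 : ℝ)..L, (‖P' t‖ + ⟪γ'' t, ν t⟫)) -
        ∫ t in (0 : ℝ)..L, ⟪γ'' t, ν t⟫ := by
    rw [intervalIntegral.integral_add i1 i2]
    ring
  rw [hsplit, hFTC]
  ring
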